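/- Let K be a field of characteristic zero or characteristic p with m ≤ p-1, m ≥ 5. No nontrivial solution (x₁,...,x_m) of the system x₁^k + ... + x_m^k = 0 (1 ≤ k ≤ m-2) has three coordinates with pairwise distinct indices i₁,i₂,i₃ such that x_{i₁} = x_{i₂} = x_{i₃}. -/

import Mathlib

open Polynomial Finset in
/-- No nontrivial solution of the power-sum system of degrees 1..m-2 has three
equal coordinates with pairwise distinct indices. -/
theorem stmt4 {K : Type*} [Field K] (p m : ℕ) (hm : 5 ≤ m)
    (hchar : CharP K 0 ∨ (p.Prime ∧ 0 < p ∧ CharP K p ∧ m ≤ p - 1))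
    (x : Fin m → K) (hx : x ≠ 0)
    (hsol : ∀ k : ℕ, 1 ≤ k → k ≤ m - 2 → ∑ i, x i ^ k = 0) :
    ¬ ∃ i₁ i₂ i₃ : Fin m, i₁ ≠ i₂ ∧ i₁ ≠ i₃ ∧ i₂ ≠ i₃ ∧
      x i₁ = x i₂ ∧ x i₂ = x i₃ := by
  classical
  rintro ⟨i₁, i₂, i₃, h12, h13, h23, e12, e23⟩
  -- naturals up to m are nonzero in K
  have hcast : ∀ k : ℕ, 0 < k → k ≤ m → (k : K) ≠ 0 := by
    intro k hk hkm
    rcases hchar with h0 | ⟨hp, hppos, hP, hmp⟩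
    · haveI := CharP.charP_to_charZero K
      exact Nat.cast_ne_zero.mpr hk.ne'
    · haveI := hP
      rw [Ne, CharP.cast_eq_zero_iff K p k]
      have hkp : k < p := lt_of_le_of_lt (hkm.trans hmp) (Nat.sub_lt hppos one_pos)
      exact Nat.not_dvd_of_pos_of_lt hk hkp
  -- the multiset of coordinates
  set s : Multiset K := Finset.univ.val.map x with hs
  have hcard : Multiset.card s = m := by simp [hs]
  -- the evaluated elementary symmetric functions
  set E : ℕ → K := fun k => s.esymm k with hE
  have hE0 : E 0 = 1 := by simp [hE, Multiset.esymm]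
  -- evaluated power sums
  have haevalpsum : ∀ k : ℕ, (MvPolynomial.aeval x) (MvPolynomial.psum (Fin m) K k)
      = ∑ i, x i ^ k := by
    intro k; simp [MvPolynomial.psum]
  have haevalesymm : ∀ k : ℕ, (MvPolynomial.aeval x) (MvPolynomial.esymm (Fin m) K k)
      = E k := by
    intro k; rw [MvPolynomial.aeval_esymm_eq_multiset_esymm]
  -- Newton's identities kill the elementary symmetric functions
  have hEzero : ∀ k : ℕ, 1 ≤ k → k ≤ m - 2 → E k = 0 := by
    intro k hk1 hk2
    have hnew := congrArg (MvPolynomial.aeval x) (MvPolynomial.mul_esymm_eq_sum (Fin m) K k)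
    simp only [map_mul, map_natCast, map_pow, map_neg, map_one, map_sum,
      haevalesymm, haevalpsum] at hnew
    have hz : ∀ a ∈ {a ∈ Finset.HasAntidiagonal.antidiagonal k | a.1 < k},
        (-1 : K) ^ a.1 * E a.1 * (∑ i, x i ^ a.2) = 0 := by
      rintro ⟨a, b⟩ hab
      simp only [Finset.mem_filter, Finset.HasAntidiagonal.mem_antidiagonal] at hab
      have hb1 : 1 ≤ b := by omega
      have hb2 : b ≤ m - 2 := by omega
      rw [hsol b hb1 hb2, mul_zero]
    rw [Finset.sum_eq_zero hz, mul_zero] at hnew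
    exact (mul_eq_zero.mp hnew).resolve_left (hcast k hk1 (by omega))
  -- the polynomial with roots x i
  set f : K[X] := (s.map fun t => X - C t).prod with hf
  have hfcoeff : ∀ k : ℕ, k ≤ m →
      f.coeff k = (-1) ^ (m - k) * E (m - k) := by
    intro k hk
    rw [hf, Multiset.prod_X_sub_C_coeff s (by rw [hcard]; exact hk), hcard]
  have hdeg : f.natDegree = m := by
    rw [hf, natDegree_multiset_prod_X_sub_C_eq_card, hcard]
  -- explicit form of f
  have hc1 : ∃ c1 : K, c1 = (-1) ^ (m - 1) * E (m - 1) := ⟨_, rfl⟩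
  obtain ⟨c1, hc1⟩ := hc1
  have hc0 : ∃ c0 : K, c0 = (-1) ^ m * E m := ⟨_, rfl⟩
  obtain ⟨c0, hc0⟩ := hc0
  have hg : ∀ n : ℕ, (X ^ m + C c1 * X + C c0).coeff n =
      (if n = m then 1 else 0) + (if n = 1 then c1 else 0) + (if n = 0 then c0 else 0) := by
    intro n
    rw [coeff_add, coeff_add, coeff_X_pow, coeff_C, coeff_C_mul, coeff_X]
    by_cases h1 : n = 1
    · subst h1; simp
    · have h1' : ¬(1 = n) := fun h => h1 h.symm
      rw [if_neg h1, if_neg h1', mul_zero]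
  have hfeq : f = X ^ m + C c1 * X + C c0 := by
    ext n
    rw [hg]
    rcases lt_trichotomy n m with hn | hn | hn
    · rcases Nat.lt_or_ge n 2 with hn2 | hn2
      · interval_cases n
        · rw [hfcoeff 0 (by omega), Nat.sub_zero, hc0,
            if_neg (by omega), if_neg (by omega), if_pos rfl]
          ring
        · rw [hfcoeff 1 (by omega), hc1,
            if_neg (by omega), if_pos rfl, if_neg (by omega)]
          ring
      · rw [hfcoeff n (by omega), hEzero (m - n) (by omega) (by omega), mul_zero,
          if_neg (by omega), if_neg (by omega), if_neg (by omega)]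
        ring
    · subst hn
      rw [hfcoeff n le_rfl, Nat.sub_self, hE0,
        if_pos rfl, if_neg (by omega), if_neg (by omega)]
      ring
    · rw [coeff_eq_zero_of_natDegree_lt (by rw [hdeg]; exact hn),
        if_neg (by omega), if_neg (by omega), if_neg (by omega)]
      ring
  -- the triple root
  set c : K := x i₁ with hc
  have h3 : (X - C c) ^ 3 ∣ f := by
    have hprod : f = ∏ i, (X - C (x i)) := by
      rw [hf, hs, Multiset.map_map]
      rfl
    have hsub : ({i₁, i₂, i₃} : Finset (Fin m)) ⊆ Finset.univ := Finset.subset_univ _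
    rw [hprod, ← Finset.prod_sdiff hsub]
    apply Dvd.dvd.mul_left
    rw [Finset.prod_insert (by simp [h12, h13]), Finset.prod_insert (by simp [h23]),
      Finset.prod_singleton, ← e12, ← e23, ← e12, ← hc]
    ring_nf
    exact dvd_rfl
  -- second derivative vanishes at c
  have hd2 : Polynomial.eval c (derivative (derivative f)) = 0 := by
    have : (X - C c) ^ 1 ∣ derivative^[2] f := by
      have := pow_sub_dvd_iterate_derivative_of_pow_dvd (p := f) (q := X - C c) (n := 3) 2 h3
      simpa using this
    rw [pow_one] at this
    have h2 : derivative^[2] f = derivative (derivative f) := by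
      simp [Function.iterate_succ, Function.comp]
    rw [h2] at this
    exact eval_eq_zero_of_dvd_of_eval_eq_zero this (by simp)
  -- compute the second derivative explicitly
  have hder1 : derivative f = C (m : K) * X ^ (m - 1) + C c1 := by
    rw [hfeq]
    simp [derivative_X_pow]
  have hder2 : derivative (derivative f) = C ((m : K) * ((m - 1 : ℕ) : K)) * X ^ (m - 2) := by
    rw [hder1]
    simp only [derivative_add, derivative_C, add_zero, derivative_C_mul, derivative_X_pow]
    rw [← mul_assoc, ← C_mul, (by omega : m - 1 - 1 = m - 2)]
  -- conclude c = 0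
  have hcz : c = 0 := by
    rw [hder2] at hd2
    simp only [eval_mul, eval_C, eval_pow, eval_X] at hd2
    have hm1 : ((m - 1 : ℕ) : K) ≠ 0 := hcast (m - 1) (by omega) (by omega)
    have hmne : (m : K) ≠ 0 := hcast m (by omega) le_rfl
    rcases mul_eq_zero.mp hd2 with h | h
    · rcases mul_eq_zero.mp h with h' | h'
      · exact absurd h' hmne
      · exact absurd h' hm1
    · exact pow_eq_zero_iff (by omega : m - 2 ≠ 0) |>.mp h
  -- first derivative at 0 gives c1 = 0
  have hc1z : c1 = 0 := by
    have hdvd : (X - C c) ^ 2 ∣ derivative f := by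
      have := pow_sub_dvd_iterate_derivative_of_pow_dvd (p := f) (q := X - C c) (n := 3) 1 h3
      simpa using this
    have h0 : Polynomial.eval c (derivative f) = 0 :=
      eval_eq_zero_of_dvd_of_eval_eq_zero (dvd_trans (dvd_pow_self _ (by norm_num)) hdvd)
        (by simp)
    rw [hder1, hcz] at h0
    simpa [zero_pow (by omega : m - 1 ≠ 0)] using h0
  -- f at 0 gives c0 = 0
  have hc0z : c0 = 0 := by
    have h0 : Polynomial.eval c f = 0 :=
      eval_eq_zero_of_dvd_of_eval_eq_zero (dvd_trans (dvd_pow_self _ (by norm_num)) h3)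
        (by simp)
    rw [hfeq, hcz] at h0
    simpa [zero_pow (by omega : m ≠ 0)] using h0
  -- hence f = X^m, so all coordinates are zero
  have hfX : f = X ^ m := by rw [hfeq, hc1z, hc0z]; simp
  apply hx
  funext i
  have hdvdi : (X - C (x i)) ∣ f := by
    have hprod : f = ∏ j, (X - C (x j)) := by
      rw [hf, hs, Multiset.map_map]; rfl
    rw [hprod]
    exact Finset.dvd_prod_of_mem _ (Finset.mem_univ i)
  have : Polynomial.eval (x i) f = 0 :=
    eval_eq_zero_of_dvd_of_eval_eq_zero hdvdi (by simp)
  rw [hfX] at this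
  simp only [eval_pow, eval_X] at this
  exact pow_eq_zero_iff (by omega : m ≠ 0) |>.mp this
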